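/- Let N ≥ 2 and a : ℕ → ℝ with a(k+1) < a(k) for all 1 ≤ k ≤ N−1, and let D(p) = Σ_{k=1}^{N} C(N−1, k−1)·p^{k−1}·(1−p)^{N−k}·a(k). Then D(0) = a(1) and D(1) = a(N), and if moreover a(1) > 0 > a(N), there exists a unique p* ∈ (0, 1) such that D(p*) = 0. -/

import Mathlib

open Finset in
/-- with `D(p) = Σ_{k=1}^{N} C(N−1,k−1) p^{k−1} (1−p)^{N−k} a(k)`
and `a` strictly decreasing on `{1,…,N}`, we have `D(0) = a(1)`, `D(1) = a(N)`,
and if `a(1) > 0 > a(N)` there is a unique `p* ∈ (0,1)` with `D(p*) = 0`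
(the fully mixed Nash equilibrium activation probability). -/
theorem fully_mixed_NE_exists_unique
    (N : ℕ) (hN : 2 ≤ N) (a : ℕ → ℝ)
    (ha : ∀ k, 1 ≤ k → k ≤ N - 1 → a (k + 1) < a k)
    (D : ℝ → ℝ)
    (hD : ∀ p, D p = ∑ k ∈ Finset.Icc 1 N,
      ((N - 1).choose (k - 1) : ℝ) * p ^ (k - 1) * (1 - p) ^ (N - k) * a k) :
    D 0 = a 1 ∧ D 1 = a N ∧
    (a 1 > 0 → 0 > a N → ∃! p : ℝ, p ∈ Set.Ioo (0 : ℝ) 1 ∧ D p = 0) := by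
  classical
  set n := N - 1 with hn
  have hN1 : n + 1 = N := by omega
  set b : ℕ → ℝ := fun j => a (j + 1) with hb
  set c : ℕ → ℝ := fun j => (n.choose j : ℝ) * b j with hc
  have hD' : ∀ p : ℝ, D p = ∑ j ∈ range (n + 1), c j * p ^ j * (1 - p) ^ (n - j) := by
    intro p
    rw [hD, ← Finset.Ico_add_one_right_eq_Icc, Finset.sum_Ico_eq_sum_range]
    have hNN : N + 1 - 1 = n + 1 := by omega
    rw [hNN]
    refine Finset.sum_congr rfl fun j hj => ?_
    simp only [mem_range] at hj
    have h1 : 1 + j - 1 = j := by omega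
    have h2 : N - (1 + j) = n - j := by omega
    have h3 : 1 + j = j + 1 := by omega
    rw [h1, h2, h3, hc, hb]
    ring
  have hD0 : D 0 = a 1 := by
    rw [hD' 0]
    rw [Finset.sum_eq_single_of_mem 0 (by simp)]
    · simp [hc, hb]
    · intro j hj hj0
      simp [zero_pow hj0]
  have hD1 : D 1 = a N := by
    rw [hD' 1]
    rw [Finset.sum_eq_single_of_mem n (by simp)]
    · simp [hc, hb, hN1]
    · intro j hj hjn
      simp only [mem_range] at hj
      have : n - j ≠ 0 := by omega
      simp [zero_pow this]
  refine ⟨hD0, hD1, fun ha1 haN => ?_⟩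
  -- basic facts
  have hb0 : b 0 = a 1 := rfl
  have hbn : b n = a N := by rw [hb]; simp [hN1]
  have hstep : ∀ j, j < n → b (j + 1) < b j := by
    intro j hj
    have := ha (j + 1) (by omega) (by omega)
    simpa [hb] using this
  have hanti : ∀ i j, i ≤ j → j ≤ n → b j ≤ b i := by
    intro i j hij hjn
    induction j with
    | zero => interval_cases i; rfl
    | succ m ih =>
      rcases Nat.eq_or_lt_of_le hij with h | h
      · rw [h]
      · have h1 := ih (by omega) (by omega)
        have h2 := hstep m (by omega)
        linarith
  -- continuity and existence
  have hcont : Continuous D := by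
    have : D = fun p => ∑ j ∈ range (n + 1), c j * p ^ j * (1 - p) ^ (n - j) := funext hD'
    rw [this]
    exact continuous_finset_sum _ fun j _ => by continuity
  have hex : ∃ p ∈ Set.Ioo (0 : ℝ) 1, D p = 0 := by
    have h01 : (0 : ℝ) ∈ Set.Ioo (D 1) (D 0) := by
      rw [hD0, hD1]; exact ⟨haN, ha1⟩
    have := intermediate_value_Ioo' (by norm_num : (0:ℝ) ≤ 1) hcont.continuousOn h01
    obtain ⟨p, hp, hDp⟩ := this
    exact ⟨p, hp, hDp⟩
  -- setup for uniqueness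
  set s := Nat.findGreatest (fun j => 0 < b j) n with hs
  have hs_le : s ≤ n := Nat.findGreatest_le n
  have hs_pos : 0 < b s := Nat.findGreatest_spec (P := fun j => 0 < b j) (Nat.zero_le n) (show 0 < b 0 from ha1)
  have hs_lt : s < n := by
    rcases Nat.eq_or_lt_of_le hs_le with h | h
    · exfalso; rw [h, hbn] at hs_pos; linarith
    · exact h
  have hneg : ∀ j, s < j → j ≤ n → b j ≤ 0 := by
    intro j h1 h2
    exact le_of_not_gt (Nat.findGreatest_is_greatest h1 h2)
  have hcsign : ∀ j ≤ n, c j * ((j : ℝ) - (s : ℝ)) ≤ 0 := by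
    intro j hj
    rcases le_or_gt j s with h | h
    · have hbj : 0 < b j := lt_of_lt_of_le hs_pos (hanti j s h hs_le)
      have hcj : 0 ≤ c j := mul_nonneg (Nat.cast_nonneg _) hbj.le
      have : (j : ℝ) - (s : ℝ) ≤ 0 := by
        have : (j : ℝ) ≤ s := by exact_mod_cast h
        linarith
      exact mul_nonpos_of_nonneg_of_nonpos hcj this
    · have hbj : b j ≤ 0 := hneg j h hj
      have hcj : c j ≤ 0 := mul_nonpos_of_nonneg_of_nonpos (Nat.cast_nonneg _) hbj
      have : (0 : ℝ) ≤ (j : ℝ) - (s : ℝ) := by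
        have : (s : ℝ) ≤ j := by exact_mod_cast h.le
        linarith
      exact mul_nonpos_of_nonpos_of_nonneg hcj this
  have hclt : c n * ((n : ℝ) - (s : ℝ)) < 0 := by
    have hcn : c n < 0 := by
      rw [hc]; simp [hbn]; linarith
    have : (0 : ℝ) < (n : ℝ) - (s : ℝ) := by
      have : (s : ℝ) < n := by exact_mod_cast hs_lt
      linarith
    exact mul_neg_of_neg_of_pos hcn this
  -- the auxiliary functions
  set g : ℝ → ℝ := fun t => ∑ j ∈ range (n + 1), c j * t ^ j with hg
  set h : ℝ → ℝ := fun t => ∑ j ∈ range (n + 1), c j * t ^ ((j : ℤ) - (s : ℤ)) with hh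
  have hgh : ∀ t : ℝ, 0 < t → g t = t ^ s * h t := by
    intro t ht
    rw [hg, hh]
    simp only [Finset.mul_sum]
    refine Finset.sum_congr rfl fun j hj => ?_
    have hts : t ^ (s : ℤ) * t ^ ((j : ℤ) - (s : ℤ)) = t ^ (j : ℤ) := by
      rw [← zpow_add₀ ht.ne']; congr 1; ring
    calc c j * t ^ j = c j * (t ^ (s : ℤ) * t ^ ((j : ℤ) - (s : ℤ))) := by
          rw [hts, zpow_natCast]
      _ = t ^ s * (c j * t ^ ((j : ℤ) - (s : ℤ))) := by rw [← zpow_natCast t s]; ring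
  have hDg : ∀ p : ℝ, p ∈ Set.Ioo (0 : ℝ) 1 → D p = (1 - p) ^ n * g (p / (1 - p)) := by
    intro p hp
    have h1p : (1 : ℝ) - p ≠ 0 := by have := hp.2; intro hcon; linarith
    rw [hD', hg]
    rw [Finset.mul_sum]
    refine Finset.sum_congr rfl fun j hj => ?_
    simp only [mem_range] at hj
    have hsplit : (1 - p) ^ n = (1 - p) ^ j * (1 - p) ^ (n - j) := by
      rw [← pow_add]; congr 1; omega
    rw [div_pow, hsplit]
    field_simp
  -- derivative of h
  have hderiv : ∀ t : ℝ, 0 < t → HasDerivAt h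
      (∑ j ∈ range (n + 1), c j * ((((j : ℤ) - (s : ℤ) : ℤ) : ℝ) * t ^ ((j : ℤ) - (s : ℤ) - 1))) t := by
    intro t ht
    rw [hh]
    apply HasDerivAt.fun_sum
    intro j hj
    exact (hasDerivAt_zpow ((j : ℤ) - (s : ℤ)) t (Or.inl ht.ne')).const_mul (c j)
  have hderiv_neg : ∀ t : ℝ, 0 < t →
      (∑ j ∈ range (n + 1), c j * ((((j : ℤ) - (s : ℤ) : ℤ) : ℝ) * t ^ ((j : ℤ) - (s : ℤ) - 1))) < 0 := by
    intro t ht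
    have := Finset.sum_lt_sum (s := range (n + 1))
      (f := fun j => c j * ((((j : ℤ) - (s : ℤ) : ℤ) : ℝ) * t ^ ((j : ℤ) - (s : ℤ) - 1)))
      (g := fun _ => (0 : ℝ))
      (by
        intro j hj
        simp only [mem_range] at hj
        have h1 := hcsign j (by omega)
        have h2 : (0 : ℝ) < t ^ ((j : ℤ) - (s : ℤ) - 1) := zpow_pos ht _
        have heqq : c j * ((((j : ℤ) - (s : ℤ) : ℤ) : ℝ) * t ^ ((j : ℤ) - (s : ℤ) - 1))
            = (c j * ((j : ℝ) - (s : ℝ))) * t ^ ((j : ℤ) - (s : ℤ) - 1) := by push_cast; ring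
        show c j * ((((j : ℤ) - (s : ℤ) : ℤ) : ℝ) * t ^ ((j : ℤ) - (s : ℤ) - 1)) ≤ 0
        rw [heqq]
        exact mul_nonpos_of_nonpos_of_nonneg h1 h2.le)
      ⟨n, by simp, by
        have h2 : (0 : ℝ) < t ^ ((n : ℤ) - (s : ℤ) - 1) := zpow_pos ht _
        have heqq : c n * ((((n : ℤ) - (s : ℤ) : ℤ) : ℝ) * t ^ ((n : ℤ) - (s : ℤ) - 1))
            = (c n * ((n : ℝ) - (s : ℝ))) * t ^ ((n : ℤ) - (s : ℤ) - 1) := by push_cast; ring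
        show c n * ((((n : ℤ) - (s : ℤ) : ℤ) : ℝ) * t ^ ((n : ℤ) - (s : ℤ) - 1)) < 0
        rw [heqq]
        exact mul_neg_of_neg_of_pos hclt h2⟩
    simpa using this
  have hanti_h : StrictAntiOn h (Set.Ioi (0 : ℝ)) := by
    apply strictAntiOn_of_deriv_neg (convex_Ioi 0)
    · intro t ht
      exact ((hderiv t ht).differentiableAt).continuousAt.continuousWithinAt
    · intro t ht
      rw [interior_Ioi] at ht
      rw [(hderiv t ht).deriv]
      exact hderiv_neg t ht
  -- uniqueness
  obtain ⟨p, hp, hDp⟩ := hex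
  refine ⟨p, ⟨hp, hDp⟩, ?_⟩
  rintro q ⟨hq, hDq⟩
  -- key : roots map to roots of h, h injective
  have key : ∀ r : ℝ, r ∈ Set.Ioo (0 : ℝ) 1 → D r = 0 → h (r / (1 - r)) = 0 := by
    intro r hr hDr
    have h1r : (0 : ℝ) < 1 - r := by linarith [hr.2]
    have htr : 0 < r / (1 - r) := div_pos hr.1 h1r
    have := hDg r hr
    rw [hDr] at this
    have hgr : g (r / (1 - r)) = 0 := by
      have hne : (1 - r) ^ n ≠ 0 := pow_ne_zero _ h1r.ne'
      rcases mul_eq_zero.mp this.symm with h | h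
      · exact absurd h hne
      · exact h
    have := hgh _ htr
    rw [hgr] at this
    have hne : (r / (1 - r)) ^ s ≠ 0 := pow_ne_zero _ htr.ne'
    rcases mul_eq_zero.mp this.symm with h | h
    · exact absurd h hne
    · exact h
  have h1p : (0 : ℝ) < 1 - p := by linarith [hp.2]
  have h1q : (0 : ℝ) < 1 - q := by linarith [hq.2]
  have htp : 0 < p / (1 - p) := div_pos hp.1 h1p
  have htq : 0 < q / (1 - q) := div_pos hq.1 h1q
  have heq : q / (1 - q) = p / (1 - p) := by
    apply hanti_h.injOn htq htp
    rw [key q hq hDq, key p hp hDp]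
  have : q * (1 - p) = p * (1 - q) := by
    field_simp at heq
    linarith [heq]
  nlinarith [this]
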